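/- Let f : ℝ → ℝ be non-increasing on [0, ∞), and suppose the function H(x) = x · f(x) is convex on [0, ∞). Then f is convex on (0, ∞). -/

import Mathlib

open Set

theorem stmt_0 (f : ℝ → ℝ)
    (hmono : ∀ x ∈ Ici (0:ℝ), ∀ y ∈ Ici (0:ℝ), x ≤ y → f y ≤ f x)
    (hH : ConvexOn ℝ (Ici 0) (fun x => x * f x)) :
    ConvexOn ℝ (Ioi 0) f := by
  refine ⟨convex_Ioi 0, fun x hx y hy a b ha hb hab => ?_⟩
  have hx' : (0:ℝ) < x := hx
  have hy' : (0:ℝ) < y := hy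
  simp only [smul_eq_mul]
  have hz : 0 < a * x + b * y := by
    rcases eq_or_lt_of_le ha with h | h
    · have hb1 : b = 1 := by linarith
      simp [← h, hb1, hy']
    · nlinarith [mul_nonneg hb hy'.le]
  have hH' := hH.2 (le_of_lt hx') (le_of_lt hy') ha hb hab
  simp only [smul_eq_mul] at hH'
  have hprod : (x - y) * (f x - f y) ≤ 0 := by
    rcases le_total x y with h | h
    · have := hmono x (le_of_lt hx') y (le_of_lt hy') h
      nlinarith
    · have := hmono y (le_of_lt hy') x (le_of_lt hx') h
      nlinarith
  have key : (a * x + b * y) * f (a * x + b * y) ≤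
      (a * x + b * y) * (a * f x + b * f y) := by
    have h2 : a * (x * f x) + b * (y * f y) - (a * x + b * y) * (a * f x + b * f y)
        = a * b * ((x - y) * (f x - f y)) := by
      linear_combination (-(a * (x * f x)) - b * (y * f y)) * hab
    nlinarith [mul_nonpos_of_nonneg_of_nonpos (mul_nonneg ha hb) hprod]
  have := (mul_le_mul_iff_right₀ hz).mp key
  linarith
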